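/- Let d ≥ 2 and let (v,M) ∈ ℂ^d ⊕ so(d,ℂ) satisfy: v_j = 0 for 1 ≤ j ≤ d−1, v_d ≠ 0, M_{j,j+1} ≠ 0 for all 1 ≤ j ≤ d−1, and M_{j,k} = 0 for all k > j+1. If D is a diagonal matrix with diagonal entries in {−1,1} such that D v = v and D M D = M, then D is the identity matrix. (The action of the group W_d(ℂ) of diagonal sign matrices on the generic part of the relative section is free.) -/
import Mathlib


open Matrix

/-- the action of the group `W_d(ℂ)` of diagonal sign matrices on the
generic part of the relative section is free: if `D` is diagonal with entries `±1`,
`(v, M)` lies in the generic part of the section, and `D v = v`, `D M D = M`, then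
`D = 1`. (0-based indices.) -/
theorem stmt11 {d : ℕ} (hd : 2 ≤ d)
    (v : Fin d → ℂ) (M : Matrix (Fin d) (Fin d) ℂ) (hMskew : Mᵀ = -M)
    (hv1 : ∀ j : Fin d, (j : ℕ) + 1 < d → v j = 0)
    (hv2 : v ⟨d - 1, by omega⟩ ≠ 0)
    (hM1 : ∀ j k : Fin d, (k : ℕ) = (j : ℕ) + 1 → M j k ≠ 0)
    (hM2 : ∀ j k : Fin d, (j : ℕ) + 1 < (k : ℕ) → M j k = 0)
    (D : Matrix (Fin d) (Fin d) ℂ)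
    (hDdiag : ∀ j k : Fin d, j ≠ k → D j k = 0)
    (hDsign : ∀ j : Fin d, D j j = 1 ∨ D j j = -1)
    (hDv : D.mulVec v = v) (hDM : D * M * D = M) :
    D = 1 := by
  -- entrywise formulas
  have hmul : ∀ j k : Fin d, (D * M * D) j k = D j j * M j k * D k k := by
    intro j k
    have h1 : (D * M) j k = D j j * M j k := by
      rw [Matrix.mul_apply]
      rw [Finset.sum_eq_single j]
      · intro b _ hb
        rw [hDdiag j b (Ne.symm hb), zero_mul]
      · intro h; exact absurd (Finset.mem_univ j) h
    rw [Matrix.mul_apply]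
    rw [Finset.sum_eq_single k]
    · rw [h1]
    · intro b _ hb
      rw [hDdiag b k hb, mul_zero]
    · intro h; exact absurd (Finset.mem_univ k) h
  -- D_{jj} = 1 for all j, downward induction
  have key : ∀ m : ℕ, ∀ hm : m < d, D ⟨d - 1 - m, by omega⟩ ⟨d - 1 - m, by omega⟩ = 1 := by
    intro m
    induction m with
    | zero =>
      intro hm
      have := congrFun hDv ⟨d - 1, by omega⟩
      rw [Matrix.mulVec, dotProduct] at this
      rw [Finset.sum_eq_single (⟨d - 1, by omega⟩ : Fin d)] at this
      · simpa using mul_right_cancel₀ hv2 (this.trans (one_mul _).symm)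
      · intro b _ hb
        rw [hDdiag _ b (Ne.symm hb), zero_mul]
      · intro h; exact absurd (Finset.mem_univ _) h
    | succ n ih =>
      intro hm
      have hn : n < d := by omega
      have ihn := ih hn
      set j : Fin d := ⟨d - 1 - (n + 1), by omega⟩
      set k : Fin d := ⟨d - 1 - n, by omega⟩
      have hk : (k : ℕ) = (j : ℕ) + 1 := by simp [j, k]; omega
      have hMjk := hM1 j k hk
      have := congrFun (congrFun hDM j) k
      rw [hmul, ihn, mul_one] at this
      exact mul_right_cancel₀ hMjk (this.trans (one_mul _).symm)
  have keyall : ∀ j : Fin d, D j j = 1 := by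
    intro j
    have h1 : (j : ℕ) < d := j.isLt
    have := key (d - 1 - j) (by omega)
    have hjeq : (⟨d - 1 - (d - 1 - (j : ℕ)), by omega⟩ : Fin d) = j := by
      apply Fin.ext; simp; omega
    rwa [hjeq] at this
  ext j k
  by_cases h : j = k
  · subst h; rw [keyall]; simp
  · rw [hDdiag j k h, Matrix.one_apply_ne h]
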